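/- Every finite college admission market with strict preferences admits a valid and stable matching. -/

import Mathlib

/-!
A college admission market: finite sets of students `S` and colleges `C`,
a capacity `q c ≥ 1` for each college, a strict total order `prefS s` on
`Option C` for each student (`none` = the student themself) and a strict
total order `prefC c` on `Option S` for each college (`none` = the college
itself).  A valid matching is a finite set `μ ⊆ S × C` in which every
student appears at most once and every college `c` appears at most `q c`
times.  Blocking pairs are pairs `(s, c) ∉ μ` such that `s` strictly
prefers `c` to their current assignment and `c` strictly prefers `s` to
some element of its assignment padded with copies of itself up to `q c`.

STATEMENT: every finite college admission market with strict preferences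
admits a valid and stable matching.
-/

-- Auxiliary development: Gale--Shapley deferred acceptance


open Finset

section helpers
variable {α : Type*} {r : α → α → Prop}

attribute [local instance] Classical.propDecidable

lemma gs_exists_max (hr : IsStrictTotalOrder α r) (T : Finset α) (h : T.Nonempty) :
    ∃ m ∈ T, ∀ x ∈ T, x ≠ m → r x m := by
  letI : IsStrictTotalOrder α r := hr
  letI : LinearOrder α := linearOrderOfSTO r
  exact ⟨T.max' h, T.max'_mem h, fun x hx hne => lt_of_le_of_ne (T.le_max' x hx) hne⟩

lemma gs_exists_min (hr : IsStrictTotalOrder α r) (T : Finset α) (h : T.Nonempty) :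
    ∃ m ∈ T, ∀ x ∈ T, x ≠ m → r m x := by
  letI : IsStrictTotalOrder α r := hr
  obtain ⟨m, hm, hm2⟩ := gs_exists_max (IsStrictTotalOrder.swap r) T h
  exact ⟨m, hm, hm2⟩

lemma gs_sto_pullback {β : Type*} {rb : β → β → Prop} (hr : IsStrictTotalOrder β rb)
    {f : α → β} (hf : Function.Injective f) :
    IsStrictTotalOrder α (fun a b => rb (f a) (f b)) where
  trichotomous a b := by
    rcases (haveI := hr; trichotomous_of rb (f a) (f b)) with h | h | h
    · exact fun h1 _ => absurd h h1
    · exact fun _ _ => hf h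
    · exact fun _ h2 => absurd h h2
  irrefl a := hr.irrefl (f a)
  trans a b c := hr.trans _ _ _

lemma gs_image_rank [DecidableEq α] (hr : IsStrictTotalOrder α r) (T : Finset α) :
    T.image (fun x => (T.filter fun y => r y x).card) = Finset.range T.card := by
  induction T using Finset.strongInduction with
  | _ T ih =>
    rcases T.eq_empty_or_nonempty with rfl | hT
    · simp
    obtain ⟨m, hm, hmax⟩ := gs_exists_max hr T hT
    set T' := T.erase m with hT'
    set g := fun x => (T.filter fun y => r y x).card with hg
    have hcard : T'.card + 1 = T.card := Finset.card_erase_add_one hm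
    have hsetm : (T.filter fun y => r y m) = T' := by
      ext y
      simp only [Finset.mem_filter, hT', Finset.mem_erase]
      constructor
      · rintro ⟨hy, hr'⟩
        exact ⟨fun he => hr.irrefl m (he ▸ hr'), hy⟩
      · rintro ⟨hne, hy⟩
        exact ⟨hy, hmax y hy hne⟩
    have hfm : g m = T'.card := by rw [hg]; simp only; rw [hsetm]
    have hins : T = insert m T' := (Finset.insert_erase hm).symm
    have himg : T.image g
        = insert T'.card (T'.image (fun x => (T'.filter fun y => r y x).card)) := by
      conv_lhs => rw [hins]
      rw [Finset.image_insert, hfm]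
      congr 1
      apply Finset.image_congr
      intro x hx
      have hxm : x ≠ m := (Finset.mem_erase.1 (hT' ▸ hx)).1
      have hxT : x ∈ T := Finset.mem_of_mem_erase (hT' ▸ hx)
      have hset : (T.filter fun y => r y x) = (T'.filter fun y => r y x) := by
        ext y
        simp only [Finset.mem_filter, hT', Finset.mem_erase]
        constructor
        · rintro ⟨hy, hr'⟩
          refine ⟨⟨fun he => ?_, hy⟩, hr'⟩
          subst he
          exact hr.irrefl y (hr.trans _ _ _ hr' (hmax x hxT hxm))
        · rintro ⟨⟨_, hy⟩, hr'⟩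
          exact ⟨hy, hr'⟩
      rw [hg]; simp only; rw [hset]
    rw [himg, ih T' (Finset.erase_ssubset hm), ← hcard, Finset.range_add_one]

lemma gs_card_rank_lt [DecidableEq α] (hr : IsStrictTotalOrder α r) (T : Finset α) (k : ℕ) :
    (T.filter fun x => (T.filter fun y => r y x).card < k).card = min k T.card := by
  set f := fun x => (T.filter fun y => r y x).card with hf
  have him := gs_image_rank hr T
  have hinj : Set.InjOn f T := by
    rw [← Finset.card_image_iff]
    rw [him, Finset.card_range]
  have h2 : (T.filter fun x => f x < k).image f = (T.image f).filter (fun v => v < k) := by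
    rw [Finset.filter_image]
  have h3 : ((Finset.range T.card).filter (fun v => v < k)).card = min k T.card := by
    have : (Finset.range T.card).filter (fun v => v < k) = Finset.range (min k T.card) := by
      ext x
      simp only [Finset.mem_filter, Finset.mem_range, lt_min_iff]
      omega
    rw [this, Finset.card_range]
  calc (T.filter fun x => f x < k).card
      = ((T.filter fun x => f x < k).image f).card :=
        (Finset.card_image_of_injOn (hinj.mono (Finset.coe_subset.2 (Finset.filter_subset _ _)))).symm
    _ = min k T.card := by rw [h2, him, h3]

end helpers

set_option linter.unusedSectionVars false
section market
variable {S C : Type*} [Fintype S] [Fintype C] [DecidableEq S] [DecidableEq C]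
attribute [local instance] Classical.propDecidable
variable (q : C → ℕ) (prefS : S → Option C → Option C → Prop)
  (prefC : C → Option S → Option S → Prop)

noncomputable def gsAvail (R : S → Finset C) (s : S) : Finset C :=
  Finset.univ.filter fun c => prefS s (some c) none ∧ c ∉ R s

variable (hS : ∀ s, IsStrictTotalOrder (Option C) (prefS s))
variable (hC : ∀ c, IsStrictTotalOrder (Option S) (prefC c))

noncomputable def gsPick (s : S) (A : Finset C) : Option C :=
  if h : A.Nonempty then
    some (Classical.choose
      (gs_exists_min (gs_sto_pullback (hS s) (Option.some_injective C)) _ h))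
  else none

noncomputable def gsProp (R : S → Finset C) (s : S) : Option C :=
  gsPick prefS hS s (gsAvail prefS R s)

lemma gsProp_spec {R : S → Finset C} {s : S} {c : C} (h : gsProp prefS hS R s = some c) :
    c ∈ gsAvail prefS R s ∧ ∀ c' ∈ gsAvail prefS R s, c' ≠ c → prefS s (some c) (some c') := by
  unfold gsProp gsPick at h
  by_cases hne : (gsAvail prefS R s).Nonempty
  · rw [dif_pos hne] at h
    obtain ⟨hmem, hbest⟩ := Classical.choose_spec
      (gs_exists_min (gs_sto_pullback (hS s) (Option.some_injective C)) _ hne)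
    obtain rfl : _ = c := Option.some.inj h
    exact ⟨hmem, fun c' hc' hne' => hbest c' hc' hne'⟩
  · rw [dif_neg hne] at h
    exact absurd h (by simp)

lemma gsProp_none {R : S → Finset C} {s : S} (h : gsProp prefS hS R s = none) :
    gsAvail prefS R s = ∅ := by
  unfold gsProp gsPick at h
  by_cases hne : (gsAvail prefS R s).Nonempty
  · rw [dif_pos hne] at h; exact absurd h (by simp)
  · exact Finset.not_nonempty_iff_eq_empty.1 hne

lemma gsProp_congr {R R' : S → Finset C} {s : S} (h : R s = R' s) :
    gsProp prefS hS R s = gsProp prefS hS R' s := by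
  have hav : gsAvail prefS R s = gsAvail prefS R' s := by
    unfold gsAvail; rw [h]
  unfold gsProp
  rw [hav]

noncomputable def gsT (R : S → Finset C) (c : C) : Finset S :=
  Finset.univ.filter fun s => gsProp prefS hS R s = some c

noncomputable def gsGood (R : S → Finset C) (c : C) : Finset S :=
  (gsT prefS hS R c).filter fun s => prefC c (some s) none

noncomputable def gsBad (R : S → Finset C) (c : C) (s : S) : ℕ :=
  ((gsGood prefS prefC hS R c).filter fun s' => prefC c (some s') (some s)).card

def gsRej (R : S → Finset C) (s : S) (c : C) : Prop :=
  ¬ prefC c (some s) none ∨ q c ≤ gsBad prefS prefC hS R c s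

noncomputable def gsStep (R : S → Finset C) (s : S) : Finset C :=
  match gsProp prefS hS R s with
  | none => R s
  | some c => if gsRej q prefS prefC hS R s c then insert c (R s) else R s

lemma gsStep_none {R : S → Finset C} {s : S} (hp : gsProp prefS hS R s = none) :
    gsStep q prefS prefC hS R s = R s := by
  unfold gsStep; rw [hp]

lemma gsStep_rej {R : S → Finset C} {s : S} {c : C} (hp : gsProp prefS hS R s = some c)
    (hr : gsRej q prefS prefC hS R s c) :
    gsStep q prefS prefC hS R s = insert c (R s) := by
  unfold gsStep; rw [hp]; simp [hr]

lemma gsStep_acc {R : S → Finset C} {s : S} {c : C} (hp : gsProp prefS hS R s = some c)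
    (hr : ¬ gsRej q prefS prefC hS R s c) :
    gsStep q prefS prefC hS R s = R s := by
  unfold gsStep; rw [hp]; simp [hr]

lemma gsStep_cases (R : S → Finset C) (s : S) :
    gsStep q prefS prefC hS R s = R s ∨
      ∃ c, c ∉ R s ∧ gsProp prefS hS R s = some c ∧ gsRej q prefS prefC hS R s c ∧
        gsStep q prefS prefC hS R s = insert c (R s) := by
  cases hp : gsProp prefS hS R s with
  | none => exact Or.inl (gsStep_none q prefS prefC hS hp)
  | some c =>
    by_cases hr : gsRej q prefS prefC hS R s c
    · refine Or.inr ⟨c, ?_, rfl, hr, gsStep_rej q prefS prefC hS hp hr⟩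
      have := (gsProp_spec prefS hS hp).1
      exact (Finset.mem_filter.1 this).2.2
    · exact Or.inl (gsStep_acc q prefS prefC hS hp hr)

include hC in
lemma gs_persist {R : S → Finset C} {c : C} {s : S}
    (h : q c ≤ gsBad prefS prefC hS R c s) :
    q c ≤ gsBad prefS prefC hS (gsStep q prefS prefC hS R) c s := by
  set T := gsGood prefS prefC hS R c with hT
  have hsto : IsStrictTotalOrder S (fun a b => prefC c (some a) (some b)) :=
    gs_sto_pullback (hC c) (Option.some_injective S)
  have hTcard : q c ≤ T.card :=
    le_trans h (Finset.card_le_card (Finset.filter_subset _ _))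
  set K := T.filter fun x => (T.filter fun y => prefC c (some y) (some x)).card < q c with hK
  have hKcard : q c ≤ K.card := by
    rw [hK, gs_card_rank_lt hsto T (q c)]
    exact le_min le_rfl hTcard
  have hKpref : ∀ x ∈ K, prefC c (some x) (some s) := by
    intro x hx
    by_contra hnx
    have hsub : (T.filter fun y => prefC c (some y) (some s)) ⊆
        (T.filter fun y => prefC c (some y) (some x)) := by
      intro y hy
      obtain ⟨hyT, hys⟩ := Finset.mem_filter.1 hy
      refine Finset.mem_filter.2 ⟨hyT, ?_⟩
      rcases (haveI := hC c; trichotomous_of (prefC c) (some x) (some s)) with h1 | h1 | h1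
      · exact absurd h1 hnx
      · rw [← h1] at hys; exact hys
      · exact (hC c).trans _ _ _ hys h1
    have : q c ≤ (T.filter fun y => prefC c (some y) (some x)).card :=
      le_trans h (Finset.card_le_card hsub)
    have hxK := (Finset.mem_filter.1 hx).2
    omega
  have hKsub : K ⊆ (gsGood prefS prefC hS (gsStep q prefS prefC hS R) c).filter
      fun s' => prefC c (some s') (some s) := by
    intro x hx
    have hxT : x ∈ T := Finset.mem_of_mem_filter _ hx
    have hxgood : prefC c (some x) none := (Finset.mem_filter.1 hxT).2
    have hxprop : gsProp prefS hS R x = some c := by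
      have := Finset.mem_of_mem_filter _ hxT
      exact (Finset.mem_filter.1 this).2
    have hnorej : ¬ gsRej q prefS prefC hS R x c := by
      intro hrej
      rcases hrej with h1 | h1
      · exact h1 hxgood
      · have hxK := (Finset.mem_filter.1 hx).2
        have : gsBad prefS prefC hS R c x
            = (T.filter fun y => prefC c (some y) (some x)).card := rfl
        omega
    have hstep : gsStep q prefS prefC hS R x = R x := gsStep_acc q prefS prefC hS hxprop hnorej
    have hprop' : gsProp prefS hS (gsStep q prefS prefC hS R) x = some c := by
      rw [gsProp_congr prefS hS hstep]; exact hxprop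
    refine Finset.mem_filter.2 ⟨Finset.mem_filter.2 ⟨Finset.mem_filter.2
      ⟨Finset.mem_univ _, hprop'⟩, hxgood⟩, hKpref x hx⟩
  exact le_trans hKcard (Finset.card_le_card hKsub)

def gsInv (R : S → Finset C) : Prop :=
  ∀ s c, c ∈ R s → prefC c (some s) none → q c ≤ gsBad prefS prefC hS R c s

include hC in
lemma gsInv_step {R : S → Finset C} (hInv : gsInv q prefS prefC hS R) :
    gsInv q prefS prefC hS (gsStep q prefS prefC hS R) := by
  intro s c hc hacc
  have base : q c ≤ gsBad prefS prefC hS R c s := by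
    rcases gsStep_cases q prefS prefC hS R s with heq | ⟨c', hnR, hp, hrej, heq⟩
    · rw [heq] at hc
      exact hInv s c hc hacc
    · rw [heq] at hc
      rcases Finset.mem_insert.1 hc with rfl | hc
      · rcases hrej with h1 | h1
        · exact absurd hacc h1
        · exact h1
      · exact hInv s c hc hacc
  exact gs_persist q prefS prefC hS hC base

end market


theorem college_admission_exists_stable_matching
    {S C : Type*} [Fintype S] [Fintype C] [DecidableEq S] [DecidableEq C]
    (q : C → ℕ) (hq : ∀ c, 1 ≤ q c)
    (prefS : S → Option C → Option C → Prop)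
    (prefC : C → Option S → Option S → Prop)
    (hS : ∀ s, IsStrictTotalOrder (Option C) (prefS s))
    (hC : ∀ c, IsStrictTotalOrder (Option S) (prefC c)) :
    ∃ μ : Finset (S × C),
      -- valid matching: each student at most once, each college within quota
      (∀ s : S, (μ.filter fun p => p.1 = s).card ≤ 1) ∧
      (∀ c : C, (μ.filter fun p => p.2 = c).card ≤ q c) ∧
      -- individual rationality: nobody matched to an unacceptable partner
      (∀ p ∈ μ, prefS p.1 (some p.2) none ∧ prefC p.2 (some p.1) none) ∧
      -- no blocking pair
      ¬ ∃ (s : S) (c : C), (s, c) ∉ μ ∧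
          -- c >_s μ(s)
          ((∃ c', (s, c') ∈ μ ∧ prefS s (some c) (some c')) ∨
            ((∀ c', (s, c') ∉ μ) ∧ prefS s (some c) none)) ∧
          -- s >_c μ(c)  (μ(c) padded with copies of c up to size q c)
          ((∃ s', (s', c) ∈ μ ∧ prefC c (some s) (some s')) ∨
            ((μ.filter fun p => p.2 = c).card < q c ∧ prefC c (some s) none)) := by
  classical
  set N := Fintype.card S * Fintype.card C with hN
  have meas_le : ∀ R : S → Finset C, (∑ s, (R s).card) ≤ N := by
    intro R
    calc ∑ s, (R s).card ≤ ∑ _s : S, Fintype.card C :=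
          Finset.sum_le_sum fun s _ => by simpa using Finset.card_le_univ (R s)
      _ = N := by simp [hN, Finset.sum_const, mul_comm]
  have step_meas : ∀ R : S → Finset C, gsStep q prefS prefC hS R ≠ R →
      (∑ s, (R s).card) < ∑ s, ((gsStep q prefS prefC hS R) s).card := by
    intro R hne
    obtain ⟨s0, hs0⟩ := Function.ne_iff.1 hne
    refine Finset.sum_lt_sum (fun s _ => ?_) ⟨s0, Finset.mem_univ _, ?_⟩
    · rcases gsStep_cases q prefS prefC hS R s with heq | ⟨c, hnR, _, _, heq⟩
      · rw [heq]
      · rw [heq]; exact Finset.card_le_card (Finset.subset_insert _ _)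
    · rcases gsStep_cases q prefS prefC hS R s0 with heq | ⟨c, hnR, _, _, heq⟩
      · exact absurd heq hs0
      · rw [heq, Finset.card_insert_of_notMem hnR]; omega
  have key : ∀ n (R : S → Finset C), gsInv q prefS prefC hS R →
      N + 1 - (∑ s, (R s).card) ≤ n →
      ∃ R', gsStep q prefS prefC hS R' = R' ∧ gsInv q prefS prefC hS R' := by
    intro n
    induction n with
    | zero =>
      intro R _ hle
      have := meas_le R
      omega
    | succ n ih =>
      intro R hInv hle
      by_cases hfix : gsStep q prefS prefC hS R = R
      · exact ⟨R, hfix, hInv⟩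
      · refine ih (gsStep q prefS prefC hS R) (gsInv_step q prefS prefC hS hC hInv) ?_
        have h1 := step_meas R hfix
        have h2 := meas_le (gsStep q prefS prefC hS R)
        omega
  obtain ⟨R, hfix, hInv⟩ := key (N + 1) (fun _ => ∅)
    (by intro s c hc _; simp at hc) (by omega)
  have hfixs : ∀ s, gsStep q prefS prefC hS R s = R s := fun s => congrFun hfix s
  have noRej : ∀ s c, gsProp prefS hS R s = some c → ¬ gsRej q prefS prefC hS R s c := by
    intro s c hp hrej
    have hnR : c ∉ R s := (Finset.mem_filter.1 (gsProp_spec prefS hS hp).1).2.2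
    have heq := gsStep_rej q prefS prefC hS hp hrej
    rw [hfixs s] at heq
    have : c ∈ R s := by rw [heq]; exact Finset.mem_insert_self _ _
    exact hnR this
  have good_of_prop : ∀ s c, gsProp prefS hS R s = some c → prefC c (some s) none := by
    intro s c hp
    by_contra hbad
    exact noRej s c hp (Or.inl hbad)
  have bad_lt : ∀ s c, gsProp prefS hS R s = some c →
      gsBad prefS prefC hS R c s < q c := by
    intro s c hp
    by_contra hge
    exact noRej s c hp (Or.inr (le_of_not_gt hge))
  have hTG : ∀ c, gsGood prefS prefC hS R c = gsT prefS hS R c := by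
    intro c
    apply Finset.filter_eq_self.2
    intro s hs
    exact good_of_prop s c (Finset.mem_filter.1 hs).2
  have quota : ∀ c, (gsT prefS hS R c).card ≤ q c := by
    intro c
    by_contra hgt
    push_neg at hgt
    have hne : (gsT prefS hS R c).Nonempty := by
      rw [← Finset.card_pos]; have := hq c; omega
    obtain ⟨m, hm, hmax⟩ :=
      gs_exists_max (gs_sto_pullback (hC c) (Option.some_injective S)) _ hne
    have hmp : gsProp prefS hS R m = some c := (Finset.mem_filter.1 hm).2
    have hsub : (gsT prefS hS R c).erase m ⊆
        ((gsGood prefS prefC hS R c).filter fun s' => prefC c (some s') (some m)) := by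
      intro x hx
      rw [hTG c]
      exact Finset.mem_filter.2 ⟨Finset.mem_of_mem_erase hx,
        hmax x (Finset.mem_of_mem_erase hx) (Finset.ne_of_mem_erase hx)⟩
    have hcard := Finset.card_le_card hsub
    rw [Finset.card_erase_of_mem hm] at hcard
    have hlt := bad_lt m c hmp
    have hbadeq : gsBad prefS prefC hS R c m
        = ((gsGood prefS prefC hS R c).filter fun s' => prefC c (some s') (some m)).card := rfl
    omega
  set μ : Finset (S × C) :=
    Finset.univ.filter (fun p : S × C => gsProp prefS hS R p.1 = some p.2) with hμdef
  have hμmem : ∀ p : S × C, p ∈ μ ↔ gsProp prefS hS R p.1 = some p.2 := by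
    intro p; simp [hμdef]
  have himg : ∀ c, (μ.filter fun p => p.2 = c) = (gsT prefS hS R c).image (fun s => (s, c)) := by
    intro c
    ext p
    simp only [Finset.mem_filter, Finset.mem_image]
    constructor
    · rintro ⟨hp, rfl⟩
      exact ⟨p.1, Finset.mem_filter.2 ⟨Finset.mem_univ _, (hμmem p).1 hp⟩, rfl⟩
    · rintro ⟨s', hs', rfl⟩
      exact ⟨(hμmem _).2 (Finset.mem_filter.1 hs').2, rfl⟩
  have hcardc : ∀ c, (μ.filter fun p => p.2 = c).card = (gsT prefS hS R c).card := by
    intro c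
    rw [himg c]
    exact Finset.card_image_of_injective _ (fun a b hab => (Prod.ext_iff.1 hab).1)
  refine ⟨μ, ?_, ?_, ?_, ?_⟩
  · intro s
    refine Finset.card_le_one.2 ?_
    intro a ha b hb
    obtain ⟨haμ, ha1⟩ := Finset.mem_filter.1 ha
    obtain ⟨hbμ, hb1⟩ := Finset.mem_filter.1 hb
    have hpa := (hμmem a).1 haμ
    have hpb := (hμmem b).1 hbμ
    have h1 : a.1 = b.1 := by rw [ha1, hb1]
    have h2 : a.2 = b.2 := by
      apply Option.some.inj
      rw [← hpa, ← hpb, h1]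
    exact Prod.ext h1 h2
  · intro c
    rw [hcardc c]
    exact quota c
  · intro p hp
    have hpp := (hμmem p).1 hp
    exact ⟨(Finset.mem_filter.1 (gsProp_spec prefS hS hpp).1).2.1, good_of_prop _ _ hpp⟩
  · rintro ⟨s, c, hnm, hstud, hcoll⟩
    have haccC : prefC c (some s) none := by
      rcases hcoll with ⟨s', hs', hp⟩ | ⟨_, hp⟩
      · exact (hC c).trans _ _ _ hp (good_of_prop s' c ((hμmem _).1 hs'))
      · exact hp
    have hcRs : c ∈ R s := by
      by_contra hcR
      rcases hstud with ⟨c', hc', hp⟩ | ⟨hun, hp⟩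
      · have hpc' : gsProp prefS hS R s = some c' := (hμmem _).1 hc'
        have haccS : prefS s (some c) none :=
          (hS s).trans _ _ _ hp (Finset.mem_filter.1 (gsProp_spec prefS hS hpc').1).2.1
        have hcav : c ∈ gsAvail prefS R s :=
          Finset.mem_filter.2 ⟨Finset.mem_univ _, haccS, hcR⟩
        have hne : c ≠ c' := by rintro rfl; exact (hS s).irrefl _ hp
        have hbest := (gsProp_spec prefS hS hpc').2 c hcav hne
        exact (hS s).irrefl _ ((hS s).trans _ _ _ hp hbest)
      · have hpn : gsProp prefS hS R s = none := by
          cases hgp : gsProp prefS hS R s with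
          | none => rfl
          | some c'' => exact absurd ((hμmem (s, c'')).2 hgp) (hun c'')
        have hcav : c ∈ gsAvail prefS R s :=
          Finset.mem_filter.2 ⟨Finset.mem_univ _, hp, hcR⟩
        rw [gsProp_none prefS hS hpn] at hcav
        exact absurd hcav (Finset.notMem_empty c)
    have hbad : q c ≤ gsBad prefS prefC hS R c s := hInv s c hcRs haccC
    have hBT : ((gsGood prefS prefC hS R c).filter fun s' => prefC c (some s') (some s))
        = gsT prefS hS R c := by
      apply Finset.eq_of_subset_of_card_le
      · rw [← hTG c]; exact Finset.filter_subset _ _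
      · exact le_trans (quota c) hbad
    have hall : ∀ s' ∈ gsT prefS hS R c, prefC c (some s') (some s) := by
      intro s' hs'
      rw [← hBT] at hs'
      exact (Finset.mem_filter.1 hs').2
    rcases hcoll with ⟨s', hs', hp⟩ | ⟨hlt, _⟩
    · have hs'T : s' ∈ gsT prefS hS R c :=
        Finset.mem_filter.2 ⟨Finset.mem_univ _, (hμmem _).1 hs'⟩
      exact (hC c).irrefl _ ((hC c).trans _ _ _ hp (hall s' hs'T))
    · have h1 : q c ≤ (gsT prefS hS R c).card := by
        rw [← hBT]
        exact hbad
      rw [hcardc c] at hlt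
      omega
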